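/- For all natural numbers n and s, Σ_{m=1}^{n} Σ_{q=1}^{min(m,s)} C(s,q) · Σ_{(n₁,…,n_q) ∈ Ω_q(m)} ∏_{j=1}^{q}(n_j+1) = C(2s+n, n) − 1 (an identity of integers). -/

import Mathlib

open PowerSeries Finset

noncomputable def psiS : PowerSeries ℤ := (PowerSeries.mk 1 : PowerSeries ℤ) ^ 2

noncomputable def phiS : PowerSeries ℤ := psiS - 1

lemma coeff_psiS (k : ℕ) : PowerSeries.coeff (R := ℤ) k psiS = (k : ℤ) + 1 := by
  rw [psiS, PowerSeries.mk_one_pow_eq_mk_choose_add, PowerSeries.coeff_mk]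
  simp [Nat.choose_one_right]
  ring

lemma coeff_phiS (k : ℕ) :
    PowerSeries.coeff (R := ℤ) k phiS = if k = 0 then 0 else (k : ℤ) + 1 := by
  rw [phiS, map_sub, coeff_psiS, PowerSeries.coeff_one]
  split <;> simp_all

lemma coeff_pow_tuple (φ : PowerSeries ℤ) (q m : ℕ) :
    PowerSeries.coeff (R := ℤ) m (φ ^ q) =
      ∑ f ∈ Finset.Nat.antidiagonalTuple q m, ∏ j, PowerSeries.coeff (R := ℤ) (f j) φ := by
  have h : φ ^ q = ∏ _j : Fin q, φ := by simp
  rw [h, PowerSeries.coeff_prod]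
  refine Finset.sum_bij' (fun l _ => ⇑l) (fun f _ => Finsupp.equivFunOnFinite.symm f)
    ?_ ?_ ?_ ?_ ?_
  · intro l hl
    simp only [Finset.mem_finsuppAntidiag] at hl
    simp [Finset.Nat.mem_antidiagonalTuple, ← hl.1]
  · intro f hf
    simp only [Finset.Nat.mem_antidiagonalTuple] at hf
    simp [Finset.mem_finsuppAntidiag, ← hf]
  · intro l hl; exact Finsupp.equivFunOnFinite.symm_apply_apply l
  · intro f hf; rfl
  · intro l hl; rfl

lemma inner_sum_eq (q m : ℕ) :
    (∑ f ∈ (Finset.Nat.antidiagonalTuple q m).filter (fun f => ∀ j, 0 < f j),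
        ∏ j, ((f j : ℤ) + 1)) = PowerSeries.coeff (R := ℤ) m (phiS ^ q) := by
  rw [coeff_pow_tuple, Finset.sum_filter]
  refine Finset.sum_congr rfl fun f _ => ?_
  by_cases h : ∀ j, 0 < f j
  · rw [if_pos h]
    refine Finset.prod_congr rfl fun j _ => ?_
    rw [coeff_phiS, if_neg (by have := h j; omega)]
  · rw [if_neg h]
    push_neg at h
    obtain ⟨j, hj⟩ := h
    refine (Finset.prod_eq_zero (Finset.mem_univ j) ?_).symm
    rw [coeff_phiS, if_pos (by omega)]

lemma coeff_phiS_pow_eq_zero {q m : ℕ} (h : m < q) :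
    PowerSeries.coeff (R := ℤ) m (phiS ^ q) = 0 := by
  rw [coeff_pow_tuple]
  refine Finset.sum_eq_zero fun f hf => ?_
  rw [Finset.Nat.mem_antidiagonalTuple] at hf
  by_cases hp : ∀ j, 0 < f j
  · exfalso
    have : (Finset.univ : Finset (Fin q)).card • 1 ≤ ∑ j, f j :=
      Finset.card_nsmul_le_sum _ _ _ fun j _ => hp j
    simp [hf] at this
    omega
  · push_neg at hp
    obtain ⟨j, hj⟩ := hp
    refine Finset.prod_eq_zero (Finset.mem_univ j) ?_
    rw [coeff_phiS, if_pos (by omega)]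

lemma middle (s m : ℕ) (hm : 1 ≤ m) :
    ∑ q ∈ Finset.Icc 1 (min m s), (Nat.choose s q : ℤ) * PowerSeries.coeff (R := ℤ) m (phiS ^ q)
      = PowerSeries.coeff (R := ℤ) m (psiS ^ s) := by
  have hpsi : psiS = phiS + 1 := by rw [phiS]; ring
  rw [hpsi, add_pow, map_sum]
  have hsub : Finset.Icc 1 (min m s) ⊆ Finset.range (s + 1) := by
    intro q hq
    simp only [Finset.mem_Icc, Finset.mem_range] at hq ⊢
    have := min_le_right m s; omega
  rw [Finset.sum_subset hsub]
  · refine Finset.sum_congr rfl fun q hq => ?_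
    rw [one_pow, mul_one, ← map_natCast (PowerSeries.C (R := ℤ)), PowerSeries.coeff_mul_C, mul_comm]
  · intro q hq hq'
    simp only [Finset.mem_range, Finset.mem_Icc, not_and_or, not_le, Nat.lt_one_iff] at hq hq'
    rcases hq' with h0 | h1
    · subst h0
      rw [pow_zero, PowerSeries.coeff_one, if_neg (by omega), mul_zero]
    · have hms : min m s < q := h1
      have h2 := min_le_left m s
      have h3 := min_le_right m s
      rcases le_or_gt q m with hqm | hqm
      · have : s < q := by omega
        rw [Nat.choose_eq_zero_of_lt this]
        simp
      · rw [coeff_phiS_pow_eq_zero hqm, mul_zero]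

lemma hockeyN (t n : ℕ) :
    ∑ m ∈ Finset.Icc 1 n, Nat.choose (t + m) t + 1 = Nat.choose (t + 1 + n) n := by
  induction n with
  | zero => simp
  | succ n ih =>
    rw [Finset.sum_Icc_succ_top (by omega)]
    have h1 : t + 1 + (n + 1) = (t + 1 + n) + 1 := by ring
    rw [h1, Nat.choose_succ_succ' (t + 1 + n) n]
    have h2 : Nat.choose (t + 1 + n) (n + 1) = Nat.choose (t + (n+1)) t := by
      rw [← Nat.choose_symm (show n + 1 ≤ t + 1 + n by omega)]
      congr 1 <;> omega
    omega

lemma coeff_psiS_pow (s m : ℕ) (hs : 1 ≤ s) :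
    PowerSeries.coeff (R := ℤ) m (psiS ^ s) = (Nat.choose (2*s - 1 + m) (2*s - 1) : ℤ) := by
  rw [psiS, ← pow_mul]
  have h : 2 * s = (2*s - 1) + 1 := by omega
  rw [h, PowerSeries.mk_one_pow_eq_mk_choose_add, PowerSeries.coeff_mk]
  norm_num

/-- The paper's Lemma (lem5): the sum over compositions of products `∏ (n_j + 1)`
evaluates to `C(2s+n, n) - 1`. -/
theorem lemma_S4_sum (n s : ℕ) :
    (∑ m ∈ Finset.Icc 1 n, ∑ q ∈ Finset.Icc 1 (min m s),
        (Nat.choose s q : ℤ) *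
          ∑ f ∈ (Finset.Nat.antidiagonalTuple q m).filter (fun f => ∀ j, 0 < f j),
            ∏ j, ((f j : ℤ) + 1)) =
      (Nat.choose (2 * s + n) n : ℤ) - 1 := by
  rcases Nat.eq_zero_or_pos s with hs | hs
  · subst hs; simp
  · have key : ∀ m ∈ Finset.Icc 1 n, (∑ q ∈ Finset.Icc 1 (min m s),
        (Nat.choose s q : ℤ) *
          ∑ f ∈ (Finset.Nat.antidiagonalTuple q m).filter (fun f => ∀ j, 0 < f j),
            ∏ j, ((f j : ℤ) + 1)) = (Nat.choose (2*s - 1 + m) (2*s - 1) : ℤ) := by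
      intro m hm
      rw [Finset.mem_Icc] at hm
      rw [← coeff_psiS_pow s m hs, ← middle s m hm.1]
      exact Finset.sum_congr rfl fun q _ => by rw [inner_sum_eq]
    rw [Finset.sum_congr rfl key]
    have h := hockeyN (2*s - 1) n
    have h2 : 2*s - 1 + 1 = 2*s := by omega
    rw [h2] at h
    have h3 : ((2*s+n).choose n : ℤ) =
        ∑ m ∈ Finset.Icc 1 n, (Nat.choose (2*s-1+m) (2*s-1) : ℤ) + 1 := by
      rw [← h]; push_cast; ring
    linarith [h3]
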